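/- In a standard gambling game, the family {v_λ : λ ∈ (0,1]} of discounted values is equicontinuous on X×Y; more precisely, if ω is a concave, nondecreasing modulus of continuity of u (i.e. |u(x,y) − u(x',y')| ≤ ω(d(x,x') + d(y,y')) for all x,x' ∈ X and y,y' ∈ Y, with ω(t) → 0 as t → 0), then every v_λ satisfies |v_λ(x,y) − v_λ(x',y')| ≤ ω(d(x,x') + d(y,y')) for all x,x' ∈ X and y,y' ∈ Y. -/

import Mathlib

open MeasureTheory Set Filter Topology

noncomputable section
namespace GG

abbrev PM (S : Type*) [MeasurableSpace S] := MeasureTheory.ProbabilityMeasure S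

variable {S : Type*} [MeasurableSpace S]

/-- Dirac probability measure. -/
def dirac (s : S) : PM S := ⟨MeasureTheory.Measure.dirac s, inferInstance⟩

/-- Integral of a function against a probability measure (the affine extension `f̃`). -/
def iPM (f : S → ℝ) (p : PM S) : ℝ := ∫ s, f s ∂(p : MeasureTheory.Measure S)

/-- `r` is the mixture `t p + (1-t) q`. -/
def IsMix (t : NNReal) (p q r : PM S) : Prop :=
  (r : MeasureTheory.Measure S)
    = (t : ENNReal) • (p : MeasureTheory.Measure S)
      + ((1 : ENNReal) - (t : ENNReal)) • (q : MeasureTheory.Measure S)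

/-- Convexity of a set of probability measures. -/
def PMConvex (A : Set (PM S)) : Prop :=
  ∀ p ∈ A, ∀ q ∈ A, ∀ t : NNReal, t ≤ 1 → ∀ r : PM S, IsMix t p q r → r ∈ A

/-- Convexity of a set of pairs of probability measures. -/
def PMConvex2 (A : Set (PM S × PM S)) : Prop :=
  ∀ a ∈ A, ∀ b ∈ A, ∀ t : NNReal, t ≤ 1 → ∀ c : PM S × PM S,
    IsMix t a.1 b.1 c.1 → IsMix t a.2 b.2 c.2 → c ∈ A

/-- Convex hull of a set of probability measures. -/
def convexHullPM (A : Set (PM S)) : Set (PM S) := ⋂₀ {T | A ⊆ T ∧ PMConvex T}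

/-- Convex hull of a set of pairs of probability measures. -/
def convexHull2 (A : Set (PM S × PM S)) : Set (PM S × PM S) := ⋂₀ {T | A ⊆ T ∧ PMConvex2 T}

/-- Kantorovich–Rubinstein distance. -/
def dKR {S : Type*} [MeasurableSpace S] [PseudoMetricSpace S] (p q : PM S) : ℝ :=
  sSup {r | ∃ f : S → ℝ, LipschitzWith 1 f ∧ r = |iPM f p - iPM f q|}

def argmaxOn {α : Type*} (f : α → ℝ) (A : Set α) : Set α := {p ∈ A | ∀ q ∈ A, f q ≤ f p}

def argminOn {α : Type*} (f : α → ℝ) (A : Set α) : Set α := {p ∈ A | ∀ q ∈ A, f p ≤ f q}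

section Topo

variable [TopologicalSpace S] [OpensMeasurableSpace S]

/-- Graph of the linear extension `Γ̃`: the closed convex hull of the graph of `Γ`. -/
def tGraph (Γ : S → Set (PM S)) : Set (PM S × PM S) :=
  closure (convexHull2 {z | ∃ x : S, z.1 = dirac x ∧ z.2 ∈ Γ x})

/-- The linear extension `Γ̃ : Δ(S) ⇉ Δ(S)`. -/
def tStep (Γ : S → Set (PM S)) (p : PM S) : Set (PM S) := {q | (p, q) ∈ tGraph Γ}

/-- Iterates `Γ̃ⁿ`, with `Γ̃⁰(p) = {p}` and `Γ̃^{n+1} = Γ̃ⁿ ∘ Γ̃`. -/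
def tIter (Γ : S → Set (PM S)) : ℕ → PM S → Set (PM S)
  | 0, p => {p}
  | n + 1, p => {r | ∃ q ∈ tStep Γ p, r ∈ tIter Γ n q}

/-- The reachable set `Γ^∞(x)`: closure of `⋃ₙ Γ̃ⁿ(δ_x)`. -/
def reach (Γ : S → Set (PM S)) (x : S) : Set (PM S) :=
  closure (⋃ n : ℕ, tIter Γ n (dirac x))

/-- There is a bounded measurable lower semicontinuous `φ` whose (expectation) argmax over
`R x` is exactly `{δ_x}`, for every `x`. -/
def AcyclicFor (R : S → Set (PM S)) : Prop :=
  ∃ φ : S → ℝ, Measurable φ ∧ (∃ C : ℝ, ∀ s, |φ s| ≤ C) ∧ LowerSemicontinuous φ ∧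
    ∀ x : S, argmaxOn (iPM φ) (R x) = {dirac x}

/-- There is a bounded measurable upper semicontinuous `ψ` whose (expectation) argmin over
`R y` is exactly `{δ_y}`, for every `y`. -/
def AcyclicForMin (R : S → Set (PM S)) : Prop :=
  ∃ ψ : S → ℝ, Measurable ψ ∧ (∃ C : ℝ, ∀ s, |ψ s| ≤ C) ∧ UpperSemicontinuous ψ ∧
    ∀ y : S, argminOn (iPM ψ) (R y) = {dirac y}

end Topo

section TwoPlayers

variable {X Y : Type*} [MeasurableSpace X] [MeasurableSpace Y]

/-- The bi-affine extension `ṽ(p,q) = ∫∫ v dp dq`. -/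
def iXY (v : X × Y → ℝ) (p : PM X) (q : PM Y) : ℝ :=
  ∫ x, ∫ y, v (x, y) ∂(q : MeasureTheory.Measure Y) ∂(p : MeasureTheory.Measure X)

/-- `v` is excessive: `v(x,y) = max_{p ∈ Γ(x)} ṽ(p,y)`. -/
def Excessive (Γ : X → Set (PM X)) (v : X × Y → ℝ) : Prop :=
  ∀ x : X, ∀ y : Y, IsGreatest ((fun p => iXY v p (dirac y)) '' Γ x) (v (x, y))

/-- `v` is depressive: `v(x,y) = min_{q ∈ Λ(y)} ṽ(x,q)`. -/
def Depressive (Λ : Y → Set (PM Y)) (v : X × Y → ℝ) : Prop :=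
  ∀ x : X, ∀ y : Y, IsLeast ((fun q => iXY v (dirac x) q) '' Λ y) (v (x, y))

/-- `v` is balanced: `v(x,y) = max_{p ∈ Γ(x)} min_{q ∈ Λ(y)} ṽ(p,q)
    = min_{q ∈ Λ(y)} max_{p ∈ Γ(x)} ṽ(p,q)`. -/
def Balanced (Γ : X → Set (PM X)) (Λ : Y → Set (PM Y)) (v : X × Y → ℝ) : Prop :=
  ∀ x : X, ∀ y : Y,
    IsGreatest {r | ∃ p ∈ Γ x, IsLeast (iXY v p '' Λ y) r} (v (x, y)) ∧
    IsLeast {r | ∃ q ∈ Λ y, IsGreatest ((fun p => iXY v p q) '' Γ x) r} (v (x, y))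

variable [TopologicalSpace X] [OpensMeasurableSpace X] [TopologicalSpace Y] [OpensMeasurableSpace Y]

/-- Property P1: for all `(x,y)` there is `p ∈ Γ^∞(x)` with `v(x,y) = ṽ(p,y) ≤ ũ(p,y)`. -/
def P1 (Γ : X → Set (PM X)) (u v : X × Y → ℝ) : Prop :=
  ∀ x : X, ∀ y : Y, ∃ p ∈ reach Γ x,
    v (x, y) = iXY v p (dirac y) ∧ iXY v p (dirac y) ≤ iXY u p (dirac y)

/-- Property P2: for all `(x,y)` there is `q ∈ Λ^∞(y)` with `v(x,y) = ṽ(x,q) ≥ ũ(x,q)`. -/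
def P2 (Λ : Y → Set (PM Y)) (u v : X × Y → ℝ) : Prop :=
  ∀ x : X, ∀ y : Y, ∃ q ∈ reach Λ y,
    v (x, y) = iXY v (dirac x) q ∧ iXY u (dirac x) q ≤ iXY v (dirac x) q

/-- `w` satisfies the Shapley fixed point equation for discount factor `lam`:
`w(x,y) = max_{p∈Γ(x)} min_{q∈Λ(y)} (λ u(x,y) + (1-λ) w̃(p,q))
        = min_{q∈Λ(y)} max_{p∈Γ(x)} (λ u(x,y) + (1-λ) w̃(p,q))`. -/
def ShapleyEq (Γ : X → Set (PM X)) (Λ : Y → Set (PM Y)) (u : X × Y → ℝ)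
    (lam : ℝ) (w : X × Y → ℝ) : Prop :=
  ∀ x : X, ∀ y : Y,
    IsGreatest {r | ∃ p ∈ Γ x,
      IsLeast ((fun q => lam * u (x, y) + (1 - lam) * iXY w p q) '' Λ y) r} (w (x, y)) ∧
    IsLeast {r | ∃ q ∈ Λ y,
      IsGreatest ((fun p => lam * u (x, y) + (1 - lam) * iXY w p q) '' Γ x) r} (w (x, y))

end TwoPlayers

/-- A standard gambling game: compact metric state spaces, continuous payoff,
continuous transition multifunctions with nonempty convex compact values,
leavable and non expansive. -/
structure StdGame (X Y : Type*) [MetricSpace X] [MeasurableSpace X] [OpensMeasurableSpace X]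
    [MetricSpace Y] [MeasurableSpace Y] [OpensMeasurableSpace Y] where
  G : X → Set (PM X)
  L : Y → Set (PM Y)
  u : X × Y → ℝ
  u_cont : Continuous u
  G_ne : ∀ x, (G x).Nonempty
  G_cvx : ∀ x, PMConvex (G x)
  G_cpt : ∀ x, IsCompact (G x)
  G_cont : ∀ ε : ℝ, 0 < ε → ∃ α : ℝ, 0 < α ∧ ∀ x x' : X, dist x x' ≤ α →
    ∀ p ∈ G x, ∃ p' ∈ G x', dKR p p' ≤ ε
  G_leav : ∀ x, dirac x ∈ G x
  G_nonexp : ∀ x x' : X, ∀ p ∈ G x, ∃ p' ∈ G x', dKR p p' ≤ dist x x'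
  L_ne : ∀ y, (L y).Nonempty
  L_cvx : ∀ y, PMConvex (L y)
  L_cpt : ∀ y, IsCompact (L y)
  L_cont : ∀ ε : ℝ, 0 < ε → ∃ α : ℝ, 0 < α ∧ ∀ y y' : Y, dist y y' ≤ α →
    ∀ q ∈ L y, ∃ q' ∈ L y', dKR q q' ≤ ε
  L_leav : ∀ y, dirac y ∈ L y
  L_nonexp : ∀ y y' : Y, ∀ q ∈ L y, ∃ q' ∈ L y', dKR q q' ≤ dist y y'

end GG

namespace GG


section aux
set_option linter.unusedSectionVars false
set_option linter.unusedVariables false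

variable {S : Type*} [MeasurableSpace S] [MetricSpace S] [CompactSpace S] [BorelSpace S] [Nonempty S]

lemma integ_cont (f : S → ℝ) (hf : Continuous f) (p : PM S) :
    Integrable f (p : Measure S) :=
  hf.integrable_of_hasCompactSupport (isClosed_tsupport f).isCompact

lemma iPM_abs_le (f : S → ℝ) (hf : Continuous f) (C : ℝ) (hC : ∀ s, |f s| ≤ C) (p : PM S) :
    |iPM f p| ≤ C := by
  have := norm_integral_le_of_norm_le_const (μ := (p : Measure S)) (f := f) (C := C)
    (Filter.Eventually.of_forall (fun s => by simpa using hC s))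
  simpa [iPM] using this

lemma dKR_bddAbove (p q : PM S) :
    BddAbove {r | ∃ f : S → ℝ, LipschitzWith 1 f ∧ r = |iPM f p - iPM f q|} := by
  obtain ⟨s₀⟩ := ‹Nonempty S›
  refine ⟨2 * Metric.diam (Set.univ : Set S), ?_⟩
  rintro r ⟨f, hf, rfl⟩
  have hbd : ∀ s, |f s - f s₀| ≤ Metric.diam (Set.univ : Set S) := by
    intro s
    have h1 : dist (f s) (f s₀) ≤ dist s s₀ := by simpa using hf.dist_le_mul s s₀
    have h2 : dist s s₀ ≤ Metric.diam (Set.univ : Set S) :=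
      Metric.dist_le_diam_of_mem isCompact_univ.isBounded (mem_univ s) (mem_univ s₀)
    calc |f s - f s₀| = dist (f s) (f s₀) := (Real.dist_eq _ _).symm
    _ ≤ _ := le_trans h1 h2
  have hcont : Continuous (fun s => f s - f s₀) := (hf.continuous).sub continuous_const
  have key : ∀ m : PM S, iPM f m = iPM (fun s => f s - f s₀) m + f s₀ := by
    intro m
    have : Integrable (fun s => f s - f s₀) (m : Measure S) := integ_cont _ hcont m
    simp [iPM, integral_sub (integ_cont f hf.continuous m) (integrable_const _), sub_add_cancel]
  rw [key p, key q]
  have b1 := iPM_abs_le _ hcont _ hbd p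
  have b2 := iPM_abs_le _ hcont _ hbd q
  have : |iPM (fun s => f s - f s₀) p + f s₀ - (iPM (fun s => f s - f s₀) q + f s₀)|
      = |iPM (fun s => f s - f s₀) p - iPM (fun s => f s - f s₀) q| := by
    congr 1; ring
  rw [this]
  calc |iPM (fun s => f s - f s₀) p - iPM (fun s => f s - f s₀) q|
      ≤ |iPM (fun s => f s - f s₀) p| + |iPM (fun s => f s - f s₀) q| := abs_sub _ _
    _ ≤ _ := by linarith [b1, b2]

lemma dKR_nonneg (p q : PM S) : 0 ≤ dKR p q := by
  apply le_csSup (dKR_bddAbove p q)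
  exact ⟨fun _ => 0, LipschitzWith.const' 0, by simp [iPM]⟩

lemma dKR_symm (p q : PM S) : dKR p q = dKR q p := by
  unfold dKR
  congr 1
  ext r
  constructor <;> rintro ⟨f, hf, rfl⟩ <;> exact ⟨f, hf, (abs_sub_comm _ _)⟩

lemma abs_iPM_sub_le (f : S → ℝ) (L : ℝ) (hL : 0 ≤ L)
    (hf : ∀ a b : S, |f a - f b| ≤ L * dist a b) (p q : PM S) :
    |iPM f p - iPM f q| ≤ L * dKR p q := by
  rcases eq_or_lt_of_le hL with h0 | hLpos
  · obtain ⟨s₀⟩ := ‹Nonempty S›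
    have hconst : ∀ s, f s = f s₀ := by
      intro s
      have h1 := hf s s₀
      rw [← h0] at h1
      have h2 : |f s - f s₀| ≤ 0 := by simpa using h1
      have h3 : f s - f s₀ = 0 := abs_nonpos_iff.mp h2
      linarith
    have hfe : f = fun _ => f s₀ := funext hconst
    have hp : iPM f p = f s₀ := by rw [hfe]; simp [iPM]
    have hq : iPM f q = f s₀ := by rw [hfe]; simp [iPM]
    rw [hp, hq, ← h0]
    simp
  · set g : S → ℝ := fun s => L⁻¹ * f s with hg
    have hgl : LipschitzWith 1 g := by
      apply LipschitzWith.of_dist_le_mul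
      intro a b
      have := hf a b
      rw [Real.dist_eq]
      have : |g a - g b| = L⁻¹ * |f a - f b| := by
        rw [hg]; simp only []
        rw [← mul_sub, abs_mul, abs_of_nonneg (inv_nonneg.mpr hL)]
      rw [this]
      calc L⁻¹ * |f a - f b| ≤ L⁻¹ * (L * dist a b) := by
            apply mul_le_mul_of_nonneg_left (hf a b) (inv_nonneg.mpr hL)
        _ = dist a b := by field_simp
      simp
    have hgi : ∀ m : PM S, iPM f m = L * iPM g m := by
      intro m
      simp only [iPM, hg]
      rw [← integral_const_mul]
      congr 1; ext s; field_simp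
    have h1 : |iPM g p - iPM g q| ≤ dKR p q :=
      le_csSup (dKR_bddAbove p q) ⟨g, hgl, rfl⟩
    rw [hgi p, hgi q, ← mul_sub, abs_mul, abs_of_nonneg hL]
    exact mul_le_mul_of_nonneg_left h1 hL


lemma cont_of_lip (f : S → ℝ) (L : ℝ) (hL : 0 ≤ L)
    (hf : ∀ a b : S, |f a - f b| ≤ L * dist a b) : Continuous f := by
  have : LipschitzWith L.toNNReal f := by
    apply LipschitzWith.of_dist_le_mul
    intro a b
    rw [Real.dist_eq, Real.coe_toNNReal L hL]
    exact hf a b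
  exact this.continuous


section omega
variable (ω : ℝ → ℝ) (hconc : ConcaveOn ℝ (Set.Ici 0) ω)
  (hmono : MonotoneOn ω (Set.Ici 0))
  (hlim : Filter.Tendsto ω (nhdsWithin 0 (Set.Ici 0)) (nhds 0))

include hconc in
lemma omega_cross {a b c : ℝ} (ha : 0 ≤ a) (hab : a < b) (hbc : b < c) :
    (c - b) * ω a + (b - a) * ω c ≤ (c - a) * ω b := by
  have hac : a < c := hab.trans hbc
  have h1 : (0:ℝ) < c - a := by linarith
  have hne : c - a ≠ 0 := ne_of_gt h1
  set μ := (c - b) / (c - a) with hμ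
  set ν := (b - a) / (c - a) with hν
  have hμ0 : 0 ≤ μ := div_nonneg (by linarith) (by linarith)
  have hν0 : 0 ≤ ν := div_nonneg (by linarith) (by linarith)
  have hsum : μ + ν = 1 := by rw [hμ, hν, ← add_div, show c - b + (b - a) = c - a from by ring, div_self hne]
  have e1 : μ * (c - a) = c - b := div_mul_cancel₀ _ hne
  have e2 : ν * (c - a) = b - a := div_mul_cancel₀ _ hne
  have hcomb : μ * a + ν * c = b := by
    have : (μ * a + ν * c) * (c - a) = b * (c - a) := by
      have : (μ * a + ν * c) * (c - a) = (μ * (c-a)) * a + (ν * (c-a)) * c := by ring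
      rw [this, e1, e2]; ring
    exact mul_right_cancel₀ hne this
  have hc := hconc.2 (mem_Ici.mpr ha) (mem_Ici.mpr (by linarith : (0:ℝ) ≤ c)) hμ0 hν0 hsum
  rw [smul_eq_mul, smul_eq_mul, smul_eq_mul, smul_eq_mul, hcomb] at hc
  have h2 : (c - a) * (μ * ω a + ν * ω c) ≤ (c - a) * ω b :=
    mul_le_mul_of_nonneg_left hc (le_of_lt h1)
  calc (c - b) * ω a + (b - a) * ω c = (μ * (c-a)) * ω a + (ν * (c-a)) * ω c := by
        rw [e1, e2]
    _ = (c - a) * (μ * ω a + ν * ω c) := by ring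
    _ ≤ (c - a) * ω b := h2

include hmono hlim in
lemma omega_zero_le : ω 0 ≤ 0 := by
  have hev : ∀ᶠ t in nhdsWithin 0 (Set.Ici 0), ω 0 ≤ ω t := by
    filter_upwards [eventually_mem_nhdsWithin] with t ht
    exact hmono (mem_Ici.mpr le_rfl) ht (mem_Ici.mp ht)
  exact ge_of_tendsto hlim hev

include hconc hmono hlim in
lemma omega_majorant {δ ε : ℝ} (hδ : 0 ≤ δ) (hε : 0 < ε) (hω0 : ω 0 = 0) :
    ∃ c L : ℝ, 0 ≤ L ∧ (∀ t, 0 ≤ t → ω t ≤ c + L * t) ∧ c + L * δ ≤ ω δ + ε := by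
  have hωnn : ∀ t, 0 ≤ t → 0 ≤ ω t := fun t ht => by
    have := hmono (mem_Ici.mpr le_rfl) (mem_Ici.mpr ht) ht
    linarith [hω0]
  obtain ⟨η, hη, hωη⟩ : ∃ η : ℝ, 0 < η ∧ ω (δ + η) ≤ ω δ + ε := by
    rcases eq_or_lt_of_le hδ with h0 | hδpos
    · rw [Metric.tendsto_nhdsWithin_nhds] at hlim
      obtain ⟨η₀, hη₀, H⟩ := hlim ε hε
      refine ⟨η₀ / 2, by linarith, ?_⟩
      have h1 : ω (δ + η₀/2) < ε := by
        have := H (x := δ + η₀/2) (mem_Ici.mpr (by linarith)) (by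
          rw [Real.dist_eq, ← h0, abs_of_nonneg (by linarith : (0:ℝ) ≤ 0 + η₀/2 - 0)]
          linarith)
        rw [Real.dist_eq, sub_zero] at this
        exact lt_of_abs_lt this
      have := hωnn δ hδ
      linarith
    · have hpos1 : (0:ℝ) < ω δ + 1 := by linarith [hωnn δ hδ]
      refine ⟨ε * δ / (ω δ + 1), by positivity, ?_⟩
      set η := ε * δ / (ω δ + 1) with hηdef
      have hηpos : 0 < η := by rw [hηdef]; positivity
      have hcross := omega_cross ω hconc (le_refl 0) hδpos (by linarith : δ < δ + η)
      rw [hω0] at hcross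
      have h1 : δ * ω (δ + η) ≤ (δ + η) * ω δ := by nlinarith [hcross]
      have hstep : η * ω δ ≤ ε * δ := by
        rw [hηdef, div_mul_eq_mul_div, div_le_iff₀ hpos1]
        nlinarith [hωnn δ hδ]
      have h2 : δ * ω (δ + η) ≤ δ * (ω δ + ε) := by nlinarith
      exact le_of_mul_le_mul_left (by linarith) hδpos
  set L := (ω (δ + η) - ω δ) / η with hLdef
  have hmδη : ω δ ≤ ω (δ + η) :=
    hmono (mem_Ici.mpr hδ) (mem_Ici.mpr (by linarith)) (by linarith)
  have hLnn : 0 ≤ L := div_nonneg (by linarith) (le_of_lt hη)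
  have hLη : L * η = ω (δ + η) - ω δ := by
    rw [hLdef]; field_simp
  refine ⟨ω (δ + η) - L * δ, L, hLnn, ?_, by linarith⟩
  intro t ht
  rcases le_or_gt t δ with htδ | htδ
  · rcases eq_or_lt_of_le htδ with rfl | htδ'
    · have h := hmono (mem_Ici.mpr ht) (mem_Ici.mpr (by linarith : (0:ℝ) ≤ t + η)) (by linarith)
      nlinarith
    · have hcross := omega_cross ω hconc ht htδ' (by linarith : δ < δ + η)
      have key : η * ω t ≤ η * (ω (δ + η) - L * δ + L * t) := by
        have e : η * (ω (δ + η) - L * δ + L * t)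
            = η * ω (δ + η) + (ω (δ + η) - ω δ) * (t - δ) := by
          rw [← hLη]; ring
        rw [e]
        nlinarith [mul_nonneg (le_of_lt hη) (by linarith : (0:ℝ) ≤ ω (δ + η) - ω δ)]
      exact le_of_mul_le_mul_left key hη
  · rcases le_or_gt t (δ + η) with ht2 | ht2
    · have h := hmono (mem_Ici.mpr (by linarith : (0:ℝ) ≤ t))
        (mem_Ici.mpr (by linarith : (0:ℝ) ≤ δ + η)) ht2
      nlinarith
    · have hcross := omega_cross ω hconc hδ (by linarith : δ < δ + η) ht2
      have key : η * ω t ≤ η * (ω (δ + η) - L * δ + L * t) := by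
        have e : η * (ω (δ + η) - L * δ + L * t)
            = η * ω (δ + η) + (ω (δ + η) - ω δ) * (t - δ) := by
          rw [← hLη]; ring
        rw [e]
        nlinarith [mul_nonneg (le_of_lt hη) (by linarith : (0:ℝ) ≤ ω (δ + η) - ω δ)]
      exact le_of_mul_le_mul_left key hη

end omega

section core
variable {X Y : Type*} [MeasurableSpace X] [MetricSpace X] [CompactSpace X] [BorelSpace X] [Nonempty X]
  [MeasurableSpace Y] [MetricSpace Y] [CompactSpace Y] [BorelSpace Y] [Nonempty Y]

lemma core_bound (w : X × Y → ℝ) (hw : Continuous w) (K L : ℝ) (hL : 0 ≤ L)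
    (hpt : ∀ (s s' : X) (t t' : Y), w (s, t) - w (s', t') ≤ K + L * (dist s s' + dist t t'))
    (p p' : PM X) (q q' : PM Y) :
    iXY w p q - iXY w p' q' ≤ K + L * (dKR p p' + dKR q q') := by
  -- bound on w
  obtain ⟨z₀, -, hz₀⟩ := isCompact_univ.exists_isMaxOn univ_nonempty hw.abs.continuousOn
  set Cw := |w z₀| with hCw
  have hCwb : ∀ z : X × Y, |w z| ≤ Cw := fun z => hz₀ (mem_univ z)
  -- the regularized function
  set F : X → Y → (X × Y) → ℝ :=
    fun s t z => w z + L * (dist s z.1 + dist t z.2) with hF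
  set wL : X → Y → ℝ := fun s t => ⨅ z : X × Y, F s t z with hwL
  have hbdd : ∀ s t, BddBelow (Set.range (F s t)) := by
    rintro s t
    refine ⟨-Cw, ?_⟩
    rintro r ⟨z, rfl⟩
    have h1 : -Cw ≤ w z := by have := hCwb z; rw [abs_le] at this; linarith [this.1]
    have h2 : 0 ≤ L * (dist s z.1 + dist t z.2) :=
      mul_nonneg hL (by positivity)
    simp only [hF]; linarith
  have f1 : ∀ s t, wL s t ≤ w (s, t) := by
    intro s t
    have := ciInf_le (hbdd s t) (s, t)
    simpa [hF] using this
  have f2 : ∀ s t, w (s, t) - K ≤ wL s t := by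
    intro s t
    apply le_ciInf
    intro z
    have := hpt s z.1 t z.2
    simp only [hF]
    have hz : w (z.1, z.2) = w z := by simp
    linarith [hz ▸ this]
  have f3 : ∀ s s' t t', wL s t ≤ wL s' t' + L * (dist s s' + dist t t') := by
    intro s s' t t'
    rw [← sub_le_iff_le_add]
    apply le_ciInf
    intro z
    have h1 : wL s t ≤ F s t z := ciInf_le (hbdd s t) z
    have h2 : F s t z ≤ F s' t' z + L * (dist s s' + dist t t') := by
      simp only [hF]
      have d1 : dist s z.1 ≤ dist s s' + dist s' z.1 := dist_triangle _ _ _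
      have d2 : dist t z.2 ≤ dist t t' + dist t' z.2 := dist_triangle _ _ _
      nlinarith [mul_nonneg hL (dist_nonneg (x := s) (y := s')),
        mul_nonneg hL (dist_nonneg (x := t) (y := t'))]
    linarith
  have f3abs : ∀ s s' t t', |wL s t - wL s' t'| ≤ L * (dist s s' + dist t t') := by
    intro s s' t t'
    rw [abs_le]
    constructor
    · have := f3 s' s t' t
      rw [dist_comm s' s, dist_comm t' t] at this
      linarith
    · linarith [f3 s s' t t']
  have sliceLip_t : ∀ s : X, ∀ t t' : Y, |wL s t - wL s t'| ≤ L * dist t t' := by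
    intro s t t'
    have := f3abs s s t t'
    simpa using this
  have sliceLip_s : ∀ t : Y, ∀ s s' : X, |wL s t - wL s' t| ≤ L * dist s s' := by
    intro t s s'
    have := f3abs s s' t t
    simpa using this
  have contSlice : ∀ s : X, Continuous (fun t => wL s t) :=
    fun s => cont_of_lip _ L hL (sliceLip_t s)
  set A : PM Y → X → ℝ := fun m s => ∫ t, wL s t ∂(m : Measure Y) with hA
  have hAlip : ∀ m : PM Y, ∀ s s' : X, |A m s - A m s'| ≤ L * dist s s' := by
    intro m s s'
    have hsub : A m s - A m s' = ∫ t, (wL s t - wL s' t) ∂(m : Measure Y) := by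
      rw [hA]; simp only []
      rw [integral_sub (integ_cont _ (contSlice s) m) (integ_cont _ (contSlice s') m)]
    rw [hsub]
    have := norm_integral_le_of_norm_le_const (μ := (m : Measure Y))
      (f := fun t => wL s t - wL s' t) (C := L * dist s s')
      (Filter.Eventually.of_forall (fun t => by
        simpa [Real.norm_eq_abs] using sliceLip_s t s s'))
    simpa [Real.norm_eq_abs] using this
  have hAcont : ∀ m : PM Y, Continuous (A m) := fun m => cont_of_lip _ L hL (hAlip m)
  have hAq : ∀ s : X, |A q s - A q' s| ≤ L * dKR q q' := by
    intro s
    exact abs_iPM_sub_le (fun t => wL s t) L hL (sliceLip_t s) q q'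
  -- B m s = inner integral of w
  set B : PM Y → X → ℝ := fun m s => ∫ t, w (s, t) ∂(m : Measure Y) with hB
  have hwSlice : ∀ s : X, Continuous (fun t => w (s, t)) :=
    fun s => hw.comp (continuous_const.prodMk continuous_id)
  have hBmeas : ∀ m : PM Y, StronglyMeasurable (B m) := by
    intro m
    exact hw.stronglyMeasurable.integral_prod_right'
  have hBbd : ∀ m : PM Y, ∀ s, |B m s| ≤ Cw := by
    intro m s
    have := norm_integral_le_of_norm_le_const (μ := (m : Measure Y))
      (f := fun t => w (s, t)) (C := Cw)
      (Filter.Eventually.of_forall (fun t => by simpa [Real.norm_eq_abs] using hCwb (s, t)))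
    simpa [Real.norm_eq_abs] using this
  have hBint : ∀ (m : PM Y) (n : PM X), Integrable (B m) (n : Measure X) := by
    intro m n
    apply Integrable.mono' (integrable_const Cw) (hBmeas m).aestronglyMeasurable
    exact Filter.Eventually.of_forall (fun s => by simpa [Real.norm_eq_abs] using hBbd m s)
  have hABle : ∀ (m : PM Y) (s : X), A m s ≤ B m s := by
    intro m s
    apply integral_mono (integ_cont _ (contSlice s) m) (integ_cont _ (hwSlice s) m)
    intro t
    exact f1 s t
  have hBAle : ∀ (m : PM Y) (s : X), B m s ≤ A m s + K := by
    intro m s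
    have h1 : ∀ t, w (s, t) ≤ wL s t + K := fun t => by linarith [f2 s t]
    have hint2 : Integrable (fun t => wL s t + K) (m : Measure Y) :=
      (integ_cont _ (contSlice s) m).add (integrable_const K)
    have := integral_mono (integ_cont _ (hwSlice s) m) hint2 h1
    rw [integral_add (integ_cont _ (contSlice s) m) (integrable_const K)] at this
    simpa using this
  -- outer comparisons
  have hup : iXY w p q ≤ (∫ s, A q s ∂(p : Measure X)) + K := by
    have h1 : iXY w p q = ∫ s, B q s ∂(p : Measure X) := rfl
    rw [h1]
    have hint2 : Integrable (fun s => A q s + K) (p : Measure X) :=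
      (integ_cont _ (hAcont q) p).add (integrable_const K)
    have := integral_mono (hBint q p) hint2 (hBAle q)
    rw [integral_add (integ_cont _ (hAcont q) p) (integrable_const K)] at this
    simpa using this
  have hdown : (∫ s, A q' s ∂(p' : Measure X)) ≤ iXY w p' q' := by
    have h1 : iXY w p' q' = ∫ s, B q' s ∂(p' : Measure X) := rfl
    rw [h1]
    exact integral_mono (integ_cont _ (hAcont q') p') (hBint q' p') (hABle q')
  -- the two transport bounds
  have t1 : |(∫ s, A q s ∂(p : Measure X)) - (∫ s, A q s ∂(p' : Measure X))| ≤ L * dKR p p' :=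
    abs_iPM_sub_le (A q) L hL (hAlip q) p p'
  have t2 : (∫ s, A q s ∂(p' : Measure X)) - (∫ s, A q' s ∂(p' : Measure X)) ≤ L * dKR q q' := by
    have hsub : (∫ s, A q s ∂(p' : Measure X)) - (∫ s, A q' s ∂(p' : Measure X))
        = ∫ s, (A q s - A q' s) ∂(p' : Measure X) := by
      rw [integral_sub (integ_cont _ (hAcont q) p') (integ_cont _ (hAcont q') p')]
    rw [hsub]
    have := norm_integral_le_of_norm_le_const (μ := (p' : Measure X))
      (f := fun s => A q s - A q' s) (C := L * dKR q q')
      (Filter.Eventually.of_forall (fun s => by simpa [Real.norm_eq_abs] using hAq s))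
    have h2 : |∫ s, (A q s - A q' s) ∂(p' : Measure X)| ≤ L * dKR q q' := by
      simpa [Real.norm_eq_abs] using this
    linarith [abs_le.mp h2]
  have t1' := abs_le.mp t1
  calc iXY w p q - iXY w p' q'
      ≤ ((∫ s, A q s ∂(p : Measure X)) + K) - (∫ s, A q' s ∂(p' : Measure X)) := by
        linarith [hup, hdown]
    _ = K + ((∫ s, A q s ∂(p : Measure X)) - (∫ s, A q s ∂(p' : Measure X)))
        + ((∫ s, A q s ∂(p' : Measure X)) - (∫ s, A q' s ∂(p' : Measure X))) := by ring
    _ ≤ K + L * dKR p p' + L * dKR q q' := by linarith [t1'.2, t2]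
    _ = K + L * (dKR p p' + dKR q q') := by ring
end core
end aux

/-- In a standard gambling game, if ω is a concave nondecreasing modulus of
continuity of u vanishing at 0, then every discounted value v_λ (λ ∈ (0,1]) admits the
same modulus of continuity; in particular the family {v_λ} is equicontinuous. -/
theorem statement0
    {X Y : Type*} [MetricSpace X] [CompactSpace X] [Nonempty X]
    [MeasurableSpace X] [BorelSpace X]
    [MetricSpace Y] [CompactSpace Y] [Nonempty Y]
    [MeasurableSpace Y] [BorelSpace Y]
    (g : StdGame X Y) (ω : ℝ → ℝ)
    (hconc : ConcaveOn ℝ (Set.Ici 0) ω)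
    (hmono : MonotoneOn ω (Set.Ici 0))
    (hlim : Filter.Tendsto ω (nhdsWithin 0 (Set.Ici 0)) (nhds 0))
    (hmod : ∀ x x' : X, ∀ y y' : Y,
      |g.u (x, y) - g.u (x', y')| ≤ ω (dist x x' + dist y y'))
    (lam : ℝ) (hlam : lam ∈ Set.Ioc (0 : ℝ) 1)
    (w : X × Y → ℝ) (hw : Continuous w) (hsh : ShapleyEq g.G g.L g.u lam w) :
    ∀ x x' : X, ∀ y y' : Y,
      |w (x, y) - w (x', y')| ≤ ω (dist x x' + dist y y') := by
  obtain ⟨hlam0, hlam1⟩ := hlam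
  obtain ⟨x₀⟩ := ‹Nonempty X›
  obtain ⟨y₀⟩ := ‹Nonempty Y›
  have hω0 : ω 0 = 0 := by
    have h1 : ω 0 ≤ 0 := omega_zero_le ω hmono hlim
    have h2 : (0:ℝ) ≤ ω 0 := by
      have := hmod x₀ x₀ y₀ y₀
      simpa using this
    linarith
  have hωnn : ∀ t : ℝ, 0 ≤ t → 0 ≤ ω t := fun t ht => by
    have := hmono (mem_Ici.mpr le_rfl) (mem_Ici.mpr ht) ht
    linarith
  obtain ⟨z₀, -, hz₀⟩ := isCompact_univ.exists_isMaxOn univ_nonempty hw.abs.continuousOn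
  set Cw := |w z₀| with hCwdef
  have hCwb : ∀ z : X × Y, |w z| ≤ Cw := fun z => hz₀ (mem_univ z)
  set S : Set ℝ :=
    {r | ∃ (x x' : X) (y y' : Y), r = w (x, y) - w (x', y') - ω (dist x x' + dist y y')}
    with hSdef
  have hSne : S.Nonempty :=
    ⟨w (x₀, y₀) - w (x₀, y₀) - ω (dist x₀ x₀ + dist y₀ y₀), x₀, x₀, y₀, y₀, rfl⟩
  have hSbdd : BddAbove S := by
    refine ⟨2 * Cw, ?_⟩
    rintro r ⟨x, x', y, y', rfl⟩
    have h1 := abs_le.mp (hCwb (x, y))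
    have h2 := abs_le.mp (hCwb (x', y'))
    have h3 : 0 ≤ ω (dist x x' + dist y y') := hωnn _ (by positivity)
    linarith [h1.2, h2.1]
  set M := sSup S with hMdef
  have hmemle : ∀ (x x' : X) (y y' : Y),
      w (x, y) - w (x', y') - ω (dist x x' + dist y y') ≤ M :=
    fun x x' y y' => le_csSup hSbdd ⟨x, x', y, y', rfl⟩
  have key : ∀ ε : ℝ, 0 < ε → ∀ r ∈ S, r ≤ (1 - lam) * (M + ε) := by
    rintro ε hε r ⟨x, x', y, y', rfl⟩
    set δ := dist x x' + dist y y' with hδdef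
    have hδ0 : (0:ℝ) ≤ δ := by positivity
    obtain ⟨c, L, hL, hmaj, hval⟩ := omega_majorant ω hconc hmono hlim hδ0 hε hω0
    have hpt : ∀ (s s' : X) (t t' : Y),
        w (s, t) - w (s', t') ≤ (M + c) + L * (dist s s' + dist t t') := by
      intro s s' t t'
      have h1 := hmemle s s' t t'
      have h2 := hmaj (dist s s' + dist t t') (by positivity)
      linarith
    -- Shapley extraction
    obtain ⟨pstar, hpstar, hleast⟩ := (hsh x y).1.1
    obtain ⟨qprime, hqprime, hgreat⟩ := (hsh x' y').2.1
    obtain ⟨p2, hp2, hp2d⟩ := g.G_nonexp x x' pstar hpstar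
    obtain ⟨q2, hq2, hq2d⟩ := g.L_nonexp y' y qprime hqprime
    have hxy : w (x, y) ≤ lam * g.u (x, y) + (1 - lam) * iXY w pstar q2 :=
      hleast.2 (Set.mem_image_of_mem _ hq2)
    have hxy' : lam * g.u (x', y') + (1 - lam) * iXY w p2 qprime ≤ w (x', y') :=
      hgreat.2 (Set.mem_image_of_mem _ hp2)
    have hcore := core_bound w hw (M + c) L hL hpt pstar p2 q2 qprime
    have hd1 : dKR pstar p2 ≤ dist x x' := hp2d
    have hd2 : dKR q2 qprime ≤ dist y y' := by
      rw [dKR_symm]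
      rw [dist_comm]
      exact hq2d
    have hLd : L * (dKR pstar p2 + dKR q2 qprime) ≤ L * δ := by
      apply mul_le_mul_of_nonneg_left _ hL
      rw [hδdef]
      have := dKR_nonneg pstar p2
      have := dKR_nonneg q2 qprime
      linarith
    have hu : lam * (g.u (x, y) - g.u (x', y')) ≤ lam * ω δ := by
      apply mul_le_mul_of_nonneg_left _ (le_of_lt hlam0)
      have := hmod x x' y y'
      exact le_trans (le_abs_self _) this
    have hiXY : iXY w pstar q2 - iXY w p2 qprime ≤ (M + c) + L * δ := le_trans hcore (by linarith)
    have h1lam : (0:ℝ) ≤ 1 - lam := by linarith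
    have hmain : w (x, y) - w (x', y') ≤ lam * ω δ + (1 - lam) * ((M + c) + L * δ) := by
      have hmul : (1 - lam) * (iXY w pstar q2 - iXY w p2 qprime)
          ≤ (1 - lam) * ((M + c) + L * δ) := mul_le_mul_of_nonneg_left hiXY h1lam
      nlinarith [hxy, hxy']
    have hcL : c + L * δ ≤ ω δ + ε := hval
    have hfin : (1 - lam) * ((M + c) + L * δ) ≤ (1 - lam) * (M + ω δ + ε) := by
      apply mul_le_mul_of_nonneg_left _ h1lam
      linarith
    nlinarith [hmain, hfin]
  have hMle : ∀ ε : ℝ, 0 < ε → M ≤ (1 - lam) * (M + ε) := fun ε hε =>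
    csSup_le hSne (key ε hε)
  have hM1 : M ≤ (1 - lam) * M := by
    apply le_of_forall_pos_le_add
    intro ε hε
    have := hMle ε hε
    nlinarith
  have hM0 : M ≤ 0 := by nlinarith
  have one_side : ∀ (a a' : X) (b b' : Y),
      w (a, b) - w (a', b') ≤ ω (dist a a' + dist b b') := by
    intro a a' b b'
    have := hmemle a a' b b'
    linarith
  intro x x' y y'
  rw [abs_sub_le_iff]
  constructor
  · exact one_side x x' y y'
  · have := one_side x' x y' y
    rwa [dist_comm x' x, dist_comm y' y] at this


end GG
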